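/- arXiv:1310.1286 — 2 statements merged into one kernel-verified Lean document; each statement's English description precedes it below -/
import Mathlib

section
/- Let r and R be positive integers with r ≤ R, let n ≥ 0, and let (x_k)_{k=1}^{2n+1} be a non-increasing sequence with 0 < x ≤ x_k ≤ X < ∞ for all k. Then (∑_{k=1}^{2n+1} (-1)^{k+1} x_k^R)^{1/R} ≤ (1/x) · (1 + X^R)^{1/r} · (∑_{k=1}^{2n+1} (-1)^{k+1} x_k^r)^{1/r}. -/
lemma alt_sum_bounds (c : ℕ → ℝ) :
    ∀ n : ℕ, (∀ k, 1 ≤ k → k < 2 * n + 1 → c (k + 1) ≤ c k) →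
      c (2 * n + 1) ≤ ∑ k ∈ Finset.Icc 1 (2 * n + 1), (-1 : ℝ) ^ (k + 1) * c k ∧
      ∑ k ∈ Finset.Icc 1 (2 * n + 1), (-1 : ℝ) ^ (k + 1) * c k ≤ c 1 := by
  intro n
  induction n with
  | zero => intro _; simp
  | succ m ih =>
    intro hmono
    have hmono' : ∀ k, 1 ≤ k → k < 2 * m + 1 → c (k + 1) ≤ c k :=
      fun k hk hk' => hmono k hk (by omega)
    obtain ⟨h1, h2⟩ := ih hmono'
    have e1 : 2 * (m + 1) + 1 = (2 * m + 1) + 1 + 1 := by ring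
    rw [e1, Finset.sum_Icc_succ_top (by omega), Finset.sum_Icc_succ_top (by omega)]
    have hs1 : ((-1 : ℝ)) ^ ((2 * m + 1) + 1 + 1) = -1 :=
      Odd.neg_one_pow ⟨m + 1, by ring⟩
    have hs2 : ((-1 : ℝ)) ^ ((2 * m + 1) + 1 + 1 + 1) = 1 :=
      Even.neg_one_pow ⟨m + 2, by ring⟩
    rw [hs1, hs2]
    have hc1 : c (2 * m + 1 + 1) ≤ c (2 * m + 1) := hmono (2 * m + 1) (by omega) (by omega)
    have hc2 : c (2 * m + 1 + 1 + 1) ≤ c (2 * m + 1 + 1) := hmono (2 * m + 2) (by omega) (by omega)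
    constructor
    · linarith
    · linarith

/-- The right-hand inequality in (geom) of the paper. -/
theorem alternating_power_mean_upper (r R : ℕ) (hr : 0 < r) (hrR : r ≤ R) (n : ℕ)
    (x : ℕ → ℝ) (xl X : ℝ) (hxl : 0 < xl)
    (hx_mono : ∀ k, 1 ≤ k → k < 2 * n + 1 → x (k + 1) ≤ x k)
    (hx_bdd : ∀ k, 1 ≤ k → k ≤ 2 * n + 1 → xl ≤ x k ∧ x k ≤ X) :
    (∑ k ∈ Finset.Icc 1 (2 * n + 1), (-1 : ℝ) ^ (k + 1) * x k ^ R) ^ (1 / (R : ℝ)) ≤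
      (1 / xl) * (1 + X ^ R) ^ (1 / (r : ℝ)) *
        (∑ k ∈ Finset.Icc 1 (2 * n + 1), (-1 : ℝ) ^ (k + 1) * x k ^ r) ^ (1 / (r : ℝ)) := by
  have hR : 0 < R := lt_of_lt_of_le hr hrR
  have hRne : (R : ℝ) ≠ 0 := by exact_mod_cast hR.ne'
  have hrne : (r : ℝ) ≠ 0 := by exact_mod_cast hr.ne'
  have hxpos : ∀ k, 1 ≤ k → k ≤ 2 * n + 1 → 0 < x k :=
    fun k hk hk' => lt_of_lt_of_le hxl (hx_bdd k hk hk').1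
  have hX : 0 < X := lt_of_lt_of_le (lt_of_lt_of_le hxl (hx_bdd 1 le_rfl (by omega)).1) (hx_bdd 1 le_rfl (by omega)).2
  -- bounds for exponent R
  have hmR : ∀ k, 1 ≤ k → k < 2 * n + 1 → x (k + 1) ^ R ≤ x k ^ R := by
    intro k hk hk'
    exact pow_le_pow_left₀ (hxpos (k + 1) (by omega) (by omega)).le (hx_mono k hk hk') R
  have hmr : ∀ k, 1 ≤ k → k < 2 * n + 1 → x (k + 1) ^ r ≤ x k ^ r := by
    intro k hk hk'
    exact pow_le_pow_left₀ (hxpos (k + 1) (by omega) (by omega)).le (hx_mono k hk hk') r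
  obtain ⟨hR1, hR2⟩ := alt_sum_bounds (fun k => x k ^ R) n hmR
  obtain ⟨hr1, hr2⟩ := alt_sum_bounds (fun k => x k ^ r) n hmr
  set SR := ∑ k ∈ Finset.Icc 1 (2 * n + 1), (-1 : ℝ) ^ (k + 1) * x k ^ R with hSRdef
  set Sr := ∑ k ∈ Finset.Icc 1 (2 * n + 1), (-1 : ℝ) ^ (k + 1) * x k ^ r with hSrdef
  have hSRnn : 0 ≤ SR := le_trans (pow_nonneg (hxpos (2 * n + 1) (by omega) le_rfl).le R) hR1
  have hSRle : SR ≤ X ^ R :=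
    le_trans hR2 (pow_le_pow_left₀ (hxpos 1 le_rfl (by omega)).le
      (hx_bdd 1 le_rfl (by omega)).2 R)
  have hSrge : xl ^ r ≤ Sr :=
    le_trans (pow_le_pow_left₀ hxl.le (hx_bdd (2 * n + 1) (by omega) le_rfl).1 r) hr1
  -- LHS ≤ X
  have hXRrw : (X ^ (R : ℕ) : ℝ) ^ (1 / (R : ℝ)) = X := by
    rw [← Real.rpow_natCast X R, ← Real.rpow_mul hX.le, mul_one_div, div_self hRne,
      Real.rpow_one]
  have hLHS : SR ^ (1 / (R : ℝ)) ≤ X := by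
    rw [← hXRrw]
    exact Real.rpow_le_rpow hSRnn hSRle (by positivity)
  -- X ≤ (1 + X^R)^(1/r)
  have hA : X ≤ (1 + X ^ R) ^ (1 / (r : ℝ)) := by
    rcases le_total X 1 with hX1 | hX1
    · calc X ≤ 1 := hX1
        _ = (1 : ℝ) ^ (1 / (r : ℝ)) := (Real.one_rpow _).symm
        _ ≤ (1 + X ^ R) ^ (1 / (r : ℝ)) :=
          Real.rpow_le_rpow (by norm_num) (by nlinarith [pow_nonneg hX.le R]) (by positivity)
    · have hxr : X ^ r ≤ 1 + X ^ R := by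
        have := pow_le_pow_right₀ hX1 hrR
        linarith
      calc X = (X ^ (r : ℕ) : ℝ) ^ (1 / (r : ℝ)) := by
            rw [← Real.rpow_natCast X r, ← Real.rpow_mul hX.le, mul_one_div, div_self hrne,
              Real.rpow_one]
        _ ≤ (1 + X ^ R) ^ (1 / (r : ℝ)) :=
          Real.rpow_le_rpow (by positivity) hxr (by positivity)
  -- xl ≤ Sr^(1/r)
  have hB : xl ≤ Sr ^ (1 / (r : ℝ)) := by
    have : (xl ^ (r : ℕ) : ℝ) ^ (1 / (r : ℝ)) = xl := by
      rw [← Real.rpow_natCast xl r, ← Real.rpow_mul hxl.le, mul_one_div, div_self hrne,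
        Real.rpow_one]
    rw [← this]
    exact Real.rpow_le_rpow (by positivity) hSrge (by positivity)
  have hAnn : (0 : ℝ) ≤ (1 + X ^ R) ^ (1 / (r : ℝ)) := by positivity
  calc SR ^ (1 / (R : ℝ)) ≤ X := hLHS
    _ ≤ (1 + X ^ R) ^ (1 / (r : ℝ)) := hA
    _ = (1 / xl) * (1 + X ^ R) ^ (1 / (r : ℝ)) * xl := by field_simp
    _ ≤ (1 / xl) * (1 + X ^ R) ^ (1 / (r : ℝ)) * Sr ^ (1 / (r : ℝ)) := by
        apply mul_le_mul_of_nonneg_left hB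
        positivity
end

section
/- Let n ≥ 1, let p ≥ 1, and let (a_k)_{k=1}^n and (b_k)_{k=1}^n be non-negative non-increasing sequences of real numbers. Then ∑_{k=1}^n (-1)^{k+1} (a_k^p + b_k^p) ≤ ∑_{k=1}^n (-1)^{k+1} (a_k + b_k)^p. -/
/-- `x ↦ (x+c)^p - x^p` is monotone on `[0, ∞)` for `p ≥ 1`, `c ≥ 0`. -/
lemma key_mono (p : ℝ) (hp : 1 ≤ p) (c : ℝ) (hc : 0 ≤ c) :
    MonotoneOn (fun x : ℝ => (x + c) ^ p - x ^ p) (Set.Ici 0) := by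
  have hp0 : (0 : ℝ) ≤ p := by linarith
  apply monotoneOn_of_deriv_nonneg (convex_Ici 0)
  · apply Continuous.continuousOn
    exact ((Real.continuous_rpow_const hp0).comp (continuous_id.add continuous_const)).sub
      (Real.continuous_rpow_const hp0)
  · intro x hx
    rw [interior_Ici] at hx
    have hx0 : (0 : ℝ) < x := hx
    have h1 : HasDerivAt (fun x : ℝ => (x + c) ^ p) (p * (x + c) ^ (p - 1) * 1) x :=
      (Real.hasDerivAt_rpow_const (Or.inl (by positivity))).comp x
        ((hasDerivAt_id x).add_const c)
    have h2 : HasDerivAt (fun x : ℝ => x ^ p) (p * x ^ (p - 1)) x :=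
      Real.hasDerivAt_rpow_const (Or.inl hx0.ne')
    exact (h1.sub h2).differentiableAt.differentiableWithinAt
  · intro x hx
    rw [interior_Ici] at hx
    have hx0 : (0 : ℝ) < x := hx
    have h1 : HasDerivAt (fun x : ℝ => (x + c) ^ p) (p * (x + c) ^ (p - 1) * 1) x :=
      (Real.hasDerivAt_rpow_const (Or.inl (by positivity))).comp x
        ((hasDerivAt_id x).add_const c)
    have h2 : HasDerivAt (fun x : ℝ => x ^ p) (p * x ^ (p - 1)) x :=
      Real.hasDerivAt_rpow_const (Or.inl hx0.ne')
    have h12 : HasDerivAt (fun x : ℝ => (x + c) ^ p - x ^ p) (p * (x + c) ^ (p - 1) * 1 - p * x ^ (p - 1)) x := h1.sub h2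
    rw [h12.deriv]
    have hle : x ^ (p - 1) ≤ (x + c) ^ (p - 1) :=
      Real.rpow_le_rpow hx0.le (by linarith) (by linarith)
    nlinarith

/-- Key two-variable monotonicity: for `0 ≤ x' ≤ x`, `0 ≤ y`:
`(x'+y)^p - x'^p ≤ (x+y)^p - x^p`. -/
lemma key_step (p : ℝ) (hp : 1 ≤ p) {x' x y : ℝ} (hx' : 0 ≤ x') (hxx : x' ≤ x)
    (hy : 0 ≤ y) : (x' + y) ^ p - x' ^ p ≤ (x + y) ^ p - x ^ p :=
  key_mono p hp y hy hx' (le_trans hx' hxx) hxx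

/-- `f(x,y) = (x+y)^p - x^p - y^p` is monotone in both variables. -/
lemma f_mono (p : ℝ) (hp : 1 ≤ p) {x' x y' y : ℝ} (hx' : 0 ≤ x') (hxx : x' ≤ x)
    (hy' : 0 ≤ y') (hyy : y' ≤ y) :
    (x' + y') ^ p - x' ^ p - y' ^ p ≤ (x + y) ^ p - x ^ p - y ^ p := by
  have h1 := key_step p hp hx' hxx hy'
  have h2 := key_step p hp hy' hyy (le_trans hx' hxx)
  rw [add_comm y' x, add_comm y x] at h2
  linarith

lemma f_nonneg (p : ℝ) (hp : 1 ≤ p) {x y : ℝ} (hx : 0 ≤ x) (hy : 0 ≤ y) :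
    0 ≤ (x + y) ^ p - x ^ p - y ^ p := by
  have h := f_mono p hp le_rfl hx le_rfl hy
  simp only [zero_add, Real.zero_rpow (show p ≠ 0 by linarith)] at h
  linarith

/-- Alternating sum of a nonneg nonincreasing sequence is between `0` and `c 0`. -/
lemma alt_sum_nonneg (n : ℕ) (c : ℕ → ℝ) (h0 : ∀ i, i < n → 0 ≤ c i)
    (hmono : ∀ i, i + 1 < n → c (i + 1) ≤ c i) :
    0 ≤ ∑ i ∈ Finset.range n, (-1 : ℝ) ^ i * c i ∧
      (0 < n → ∑ i ∈ Finset.range n, (-1 : ℝ) ^ i * c i ≤ c 0) := by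
  induction n generalizing c with
  | zero => simp
  | succ n ih =>
    have hRw : ∑ i ∈ Finset.range (n + 1), (-1 : ℝ) ^ i * c i =
        c 0 - ∑ i ∈ Finset.range n, (-1 : ℝ) ^ i * c (i + 1) := by
      rw [Finset.sum_range_succ' (fun i => (-1 : ℝ) ^ i * c i) n]
      have : ∀ i, (-1 : ℝ) ^ (i + 1) * c (i + 1) = -((-1 : ℝ) ^ i * c (i + 1)) := by
        intro i; rw [pow_succ]; ring
      simp only [this, Finset.sum_neg_distrib]
      ring
    obtain ⟨ih1, ih2⟩ := ih (fun i => c (i + 1))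
      (fun i hi => h0 (i + 1) (by omega)) (fun i hi => hmono (i + 1) (by omega))
    have hc0 : 0 ≤ c 0 := h0 0 (by omega)
    constructor
    · rw [hRw]
      rcases Nat.eq_zero_or_pos n with h | h
      · subst h; simpa using hc0
      · have h1 := ih2 h
        have h2 : c 1 ≤ c 0 := hmono 0 (by omega)
        linarith
    · intro _
      rw [hRw]
      linarith

/-- Inequality (ineq22) of the paper: alternating superadditivity of `t ↦ t^p`, `p ≥ 1`,
for non-negative non-increasing sequences. -/
theorem alternating_superadditive (n : ℕ) (hn : 1 ≤ n) (p : ℝ) (hp : 1 ≤ p)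
    (a b : ℕ → ℝ)
    (ha_nonneg : ∀ k, 1 ≤ k → k ≤ n → 0 ≤ a k)
    (hb_nonneg : ∀ k, 1 ≤ k → k ≤ n → 0 ≤ b k)
    (ha_mono : ∀ k, 1 ≤ k → k < n → a (k + 1) ≤ a k)
    (hb_mono : ∀ k, 1 ≤ k → k < n → b (k + 1) ≤ b k) :
    ∑ k ∈ Finset.Icc 1 n, (-1 : ℝ) ^ (k + 1) * (a k ^ p + b k ^ p) ≤
      ∑ k ∈ Finset.Icc 1 n, (-1 : ℝ) ^ (k + 1) * (a k + b k) ^ p := by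
  rw [← sub_nonneg, ← Finset.sum_sub_distrib]
  have hRw : ∀ k, (-1 : ℝ) ^ (k + 1) * (a k + b k) ^ p -
      (-1 : ℝ) ^ (k + 1) * (a k ^ p + b k ^ p) =
      (-1 : ℝ) ^ (k + 1) * ((a k + b k) ^ p - a k ^ p - b k ^ p) := by
    intro k; ring
  simp only [hRw]
  have hIcc : Finset.Icc 1 n = Finset.Ico 1 (n + 1) := by
    rw [Finset.Ico_add_one_right_eq_Icc]
  rw [hIcc, Finset.sum_Ico_eq_sum_range]
  have hsign : ∀ i : ℕ, (-1 : ℝ) ^ (1 + i + 1) = (-1 : ℝ) ^ i := by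
    intro i
    rw [show 1 + i + 1 = i + 2 by omega, pow_add]
    simp
  simp only [hsign]
  refine (alt_sum_nonneg (n + 1 - 1)
    (fun i => (a (1 + i) + b (1 + i)) ^ p - a (1 + i) ^ p - b (1 + i) ^ p) ?_ ?_).1
  · intro i hi
    have h1 : 1 ≤ 1 + i := by omega
    have h2 : 1 + i ≤ n := by omega
    exact f_nonneg p hp (ha_nonneg _ h1 h2) (hb_nonneg _ h1 h2)
  · intro i hi
    have h1 : 1 ≤ 1 + i := by omega
    have h2 : 1 + i < n := by omega
    have h3 : 1 + (i + 1) = (1 + i) + 1 := by omega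
    rw [h3]
    exact f_mono p hp (ha_nonneg _ (by omega) (by omega))
      (ha_mono _ h1 h2) (hb_nonneg _ (by omega) (by omega)) (hb_mono _ h1 h2)
end
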